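/- Let α ≥ 1 and let f⁻¹ : ℕ → ℕ be a monotone function with f⁻¹(j) ≤ j for all j. Define sequences Λ_j by Λ_0 = 1 and Λ_{j+1} = Λ_j + Λ_{f⁻¹(j)}, and r_j by r_0 = 1 and r_{j+1} = (1+1/α)·r_j + (2+1/α)·r_{f⁻¹(j)}. If d > 0 satisfies (1+1/α)^{-d} + (2+1/α)^{-d} ≤ 1, then r_j ≥ Λ_j^{1+1/d} for every j ≥ 0. -/

import Mathlib

lemma key_ineq (a b d x y : ℝ) (ha : 0 < a) (hb : 0 < b) (hd : 0 < d)
    (hsum : a ^ (-d) + b ^ (-d) ≤ 1) (hx : 0 ≤ x) (hy : 0 ≤ y) :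
    (x + y) ^ (1 + 1 / d) ≤ a * x ^ (1 + 1 / d) + b * y ^ (1 + 1 / d) := by
  set p : ℝ := 1 + 1 / d with hp
  have hdinv : 0 < 1 / d := by positivity
  have hp1 : 1 ≤ p := by rw [hp]; linarith
  set t : ℝ := a ^ (-d) with ht
  set s : ℝ := b ^ (-d) with hs
  have htpos : 0 < t := Real.rpow_pos_of_pos ha _
  have hspos : 0 < s := Real.rpow_pos_of_pos hb _
  have hw1 : (0:ℝ) < 1 - s := by linarith
  have htle : t ≤ 1 - s := by linarith
  have hconv := (convexOn_rpow hp1).2 (Set.mem_Ici.mpr (by positivity : (0:ℝ) ≤ x / (1 - s)))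
    (Set.mem_Ici.mpr (by positivity : (0:ℝ) ≤ y / s)) hw1.le hspos.le (by ring)
  simp only [smul_eq_mul] at hconv
  have hlhs : (1 - s) * (x / (1 - s)) + s * (y / s) = x + y := by
    field_simp
  rw [hlhs] at hconv
  refine hconv.trans ?_
  have hxt : (1 - s) * (x / (1 - s)) ^ p = (1 - s) ^ (1 - p) * x ^ p := by
    rw [Real.div_rpow hx hw1.le, Real.rpow_sub hw1, Real.rpow_one]; ring
  have hys : s * (y / s) ^ p = s ^ (1 - p) * y ^ p := by
    rw [Real.div_rpow hy hspos.le, Real.rpow_sub hspos, Real.rpow_one]; ring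
  have hexp : -d * (1 - p) = 1 := by rw [hp]; field_simp; ring
  have hta : t ^ (1 - p) = a := by
    rw [ht, ← Real.rpow_mul ha.le, hexp, Real.rpow_one]
  have htb : s ^ (1 - p) = b := by
    rw [hs, ← Real.rpow_mul hb.le, hexp, Real.rpow_one]
  have hle1 : (1 - s) ^ (1 - p) ≤ a := by
    rw [← hta]
    exact Real.rpow_le_rpow_of_nonpos htpos htle (by linarith)
  rw [hxt, hys, htb]
  have : (1 - s) ^ (1 - p) * x ^ p ≤ a * x ^ p :=
    mul_le_mul_of_nonneg_right hle1 (Real.rpow_nonneg hx _)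
  linarith

/-- Let `α ≥ 1`, `f⁻¹` monotone with `f⁻¹(j) ≤ j`, `Λ_0 = 1`,
`Λ_{j+1} = Λ_j + Λ_{f⁻¹(j)}`, `r_0 = 1`,
`r_{j+1} = (1+1/α)·r_j + (2+1/α)·r_{f⁻¹(j)}`. If `d > 0` satisfies
`(1+1/α)^{-d} + (2+1/α)^{-d} ≤ 1`, then `r_j ≥ Λ_j^{1+1/d}` for all `j`. -/
theorem stmt_15 (α : ℝ) (hα : 1 ≤ α) (finv : ℕ → ℕ) (hmono : Monotone finv)
    (hle : ∀ j, finv j ≤ j) (Λ r : ℕ → ℝ)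
    (hΛ0 : Λ 0 = 1) (hΛ : ∀ j, Λ (j + 1) = Λ j + Λ (finv j))
    (hr0 : r 0 = 1)
    (hr : ∀ j, r (j + 1) = (1 + 1 / α) * r j + (2 + 1 / α) * r (finv j))
    (d : ℝ) (hd : 0 < d)
    (hsum : (1 + 1 / α) ^ (-d) + (2 + 1 / α) ^ (-d) ≤ 1) :
    ∀ j, Λ j ^ (1 + 1 / d) ≤ r j := by
  have hαpos : (0:ℝ) < α := by linarith
  have ha : (0:ℝ) < 1 + 1 / α := by positivity
  have hb : (0:ℝ) < 2 + 1 / α := by positivity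
  have hΛ1 : ∀ j, 1 ≤ Λ j := by
    intro j
    induction j using Nat.strong_induction_on with
    | _ j ih =>
      match j with
      | 0 => rw [hΛ0]
      | k + 1 =>
        have h1 := ih k (Nat.lt_succ_self k)
        have h2 := ih (finv k) (Nat.lt_succ_of_le (hle k))
        rw [hΛ k]; linarith
  intro j
  induction j using Nat.strong_induction_on with
  | _ j ih =>
    match j with
    | 0 => rw [hΛ0, hr0, Real.one_rpow]
    | k + 1 =>
      have h1 := ih k (Nat.lt_succ_self k)
      have h2 := ih (finv k) (Nat.lt_succ_of_le (hle k))
      rw [hΛ k, hr k]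
      refine (key_ineq _ _ d (Λ k) (Λ (finv k)) ha hb hd hsum
        (by linarith [hΛ1 k]) (by linarith [hΛ1 (finv k)])).trans ?_
      have := mul_le_mul_of_nonneg_left h1 ha.le
      have := mul_le_mul_of_nonneg_left h2 hb.le
      linarith
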